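/- Let 𝒢 be a family of connected non-trivial graphs on a common vertex set V. Let ℋ be a family of graphs on a common vertex set V'₁ with |V'₁| ≥ 7 such that every H ∈ ℋ is a path graph, or a cycle graph, or has diameter D(H) ≥ 6, or has girth g(H) ≥ 5 and minimum degree δ(H) ≥ 3. Let ℋ' be a family of graphs on a common vertex set V'₂ with |V'₂| ≥ 7, disjoint from V'₁, satisfying the same conditions. Then Sd_A(𝒢⊙(ℋ+ℋ')) = |V| · Sd_A(ℋ) + |V| · Sd_A(ℋ'). -/

import Mathlib

open SimpleGraph

/-- `S` is a metric generator for `G`: every pair of distinct vertices is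
distinguished by some element of `S` via the shortest-path distance. -/
def IsMetricGen {V : Type*} (G : SimpleGraph V) (S : Set V) : Prop :=
  ∀ u v : V, u ≠ v → ∃ s ∈ S, G.dist s u ≠ G.dist s v

/-- `S` is an adjacency generator for `G`. -/
def IsAdjGen {V : Type*} (G : SimpleGraph V) (S : Set V) : Prop :=
  ∀ x y : V, x ∉ S → y ∉ S → x ≠ y → ∃ s ∈ S, Xor' (G.Adj s x) (G.Adj s y)

/-- `S` is a simultaneous metric generator for the family `𝒢`. -/
def IsSimMetricGen {V : Type*} (𝒢 : Set (SimpleGraph V)) (S : Set V) : Prop :=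
  ∀ G ∈ 𝒢, IsMetricGen G S

/-- `S` is a simultaneous adjacency generator for the family `ℋ`. -/
def IsSimAdjGen {V : Type*} (ℋ : Set (SimpleGraph V)) (S : Set V) : Prop :=
  ∀ H ∈ ℋ, IsAdjGen H S

/-- The simultaneous metric dimension of a family of graphs. -/
noncomputable def Sd {V : Type*} (𝒢 : Set (SimpleGraph V)) : ℕ :=
  sInf {n | ∃ S : Set V, S.ncard = n ∧ IsSimMetricGen 𝒢 S}

/-- The simultaneous adjacency dimension of a family of graphs. -/
noncomputable def SdA {V : Type*} (ℋ : Set (SimpleGraph V)) : ℕ :=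
  sInf {n | ∃ S : Set V, S.ncard = n ∧ IsSimAdjGen ℋ S}

/-- The adjacency dimension of a graph. -/
noncomputable def adjDim {V : Type*} (G : SimpleGraph V) : ℕ := SdA {G}

/-- `B` is an adjacency basis of `G`. -/
def IsAdjBasis {V : Type*} (G : SimpleGraph V) (B : Set V) : Prop :=
  IsAdjGen G B ∧ B.ncard = adjDim G

/-- `B` is a simultaneous adjacency basis of the family `ℋ`. -/
def IsSimAdjBasis {V : Type*} (ℋ : Set (SimpleGraph V)) (B : Set V) : Prop :=
  IsSimAdjGen ℋ B ∧ B.ncard = SdA ℋ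

/-- `D` is a dominating set of `G`. -/
def IsDomSet {V : Type*} (G : SimpleGraph V) (D : Set V) : Prop :=
  ∀ v ∉ D, ∃ u ∈ D, G.Adj u v

/-- `D` is a simultaneous dominating set of the family `𝒢`. -/
def IsSimDomSet {V : Type*} (𝒢 : Set (SimpleGraph V)) (D : Set V) : Prop :=
  ∀ G ∈ 𝒢, IsDomSet G D

/-- The simultaneous domination number of a family of graphs. -/
noncomputable def Sgamma {V : Type*} (𝒢 : Set (SimpleGraph V)) : ℕ :=
  sInf {n | ∃ D : Set V, D.ncard = n ∧ IsSimDomSet 𝒢 D}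

/-- The domination number of a graph. -/
noncomputable def domNum {V : Type*} (G : SimpleGraph V) : ℕ := Sgamma {G}

/-- `γ'(G) = min over vertices `v` of `γ(G - v)`. -/
noncomputable def gammaPrime {V : Type*} (G : SimpleGraph V) : ℕ :=
  sInf {n | ∃ v : V, n = domNum (G.induce {v}ᶜ)}

/-- The corona product `G ⊙ H`: one copy of `G` together with a copy of `H`
for each vertex `i` of `G`, joining `i` to every vertex of its copy. -/
def corona {V V' : Type*} (G : SimpleGraph V) (H : SimpleGraph V') :
    SimpleGraph (V ⊕ V × V') where
  Adj x y :=
    match x, y with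
    | Sum.inl i, Sum.inl j => G.Adj i j
    | Sum.inl i, Sum.inr p => i = p.1
    | Sum.inr p, Sum.inl j => p.1 = j
    | Sum.inr p, Sum.inr q => p.1 = q.1 ∧ H.Adj p.2 q.2
  symm := by
    constructor
    rintro (i | p) (j | q) h
    · exact G.adj_symm h
    · exact h.symm
    · exact h.symm
    · exact ⟨h.1.symm, H.adj_symm h.2⟩
  loopless := by
    constructor
    rintro (i | p) h
    · exact G.irrefl h
    · exact H.irrefl h.2

/-- The family `{G ⊙ H : G ∈ 𝒢, H ∈ ℋ}` of corona products. -/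
def coronaFam {V V' : Type*} (𝒢 : Set (SimpleGraph V)) (ℋ : Set (SimpleGraph V')) :
    Set (SimpleGraph (V ⊕ V × V')) :=
  {K | ∃ G ∈ 𝒢, ∃ H ∈ ℋ, K = corona G H}

/-- The join `G + H` of two (vertex-disjoint) graphs. -/
def joinG {V₁ V₂ : Type*} (G : SimpleGraph V₁) (H : SimpleGraph V₂) :
    SimpleGraph (V₁ ⊕ V₂) where
  Adj x y :=
    match x, y with
    | Sum.inl a, Sum.inl b => G.Adj a b
    | Sum.inl _, Sum.inr _ => True
    | Sum.inr _, Sum.inl _ => True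
    | Sum.inr a, Sum.inr b => H.Adj a b
  symm := by
    constructor
    rintro (a | a) (b | b) h
    · exact G.adj_symm h
    · trivial
    · trivial
    · exact H.adj_symm h
  loopless := by
    constructor
    rintro (a | a) h
    · exact G.irrefl h
    · exact H.irrefl h

/-- The family `{G + H : G ∈ 𝒢, H ∈ ℋ}` of joins. -/
def joinFam {V₁ V₂ : Type*} (𝒢 : Set (SimpleGraph V₁)) (ℋ : Set (SimpleGraph V₂)) :
    Set (SimpleGraph (V₁ ⊕ V₂)) :=
  {K | ∃ G ∈ 𝒢, ∃ H ∈ ℋ, K = joinG G H}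

/-- The family `𝒢_B(G)`: all graphs `G'` such that, for some permutation `f` of the
vertex set fixing `B` pointwise, `N_{G'}(x) = f(N_G(x))` for every `x ∈ B`. -/
def GBfam {V : Type*} (G : SimpleGraph V) (B : Set V) : Set (SimpleGraph V) :=
  {G' | ∃ f : Equiv.Perm V, (∀ x ∈ B, f x = x) ∧
    ∀ x ∈ B, G'.neighborSet x = f '' (G.neighborSet x)}

section Helpers
variable {α : Type*}

lemma egirth_le_of_isCycle {G : SimpleGraph α} {a : α} {w : G.Walk a a} (h : w.IsCycle) :
    G.egirth ≤ w.length := by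
  rw [SimpleGraph.egirth]
  exact iInf_le_of_le a (iInf_le_of_le w (iInf_le _ h))

lemma no_triangle {G : SimpleGraph α} (hg : 5 ≤ G.egirth) {a b c : α}
    (h1 : G.Adj a b) (h2 : G.Adj b c) (h3 : G.Adj c a) : False := by
  have hab := h1.ne
  have hbc := h2.ne
  have hca := h3.ne
  set w : G.Walk a a := Walk.cons h1 (Walk.cons h2 (Walk.cons h3 Walk.nil)) with hw
  have hc : w.IsCycle := by
    rw [Walk.isCycle_def]
    refine ⟨?_, by simp [hw], ?_⟩
    · rw [Walk.isTrail_def]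
      simp [hw, Sym2.eq, Sym2.rel_iff', hab, hbc, hca, hab.symm, hbc.symm, hca.symm]
    · simp [hw]
      aesop
  have := egirth_le_of_isCycle hc
  rw [hw] at this
  simp at this
  have := le_trans hg this
  norm_num at this

lemma no_c4 {G : SimpleGraph α} (hg : 5 ≤ G.egirth) {a b c d : α} (hac : a ≠ c) (hbd : b ≠ d)
    (h1 : G.Adj a b) (h2 : G.Adj b c) (h3 : G.Adj c d) (h4 : G.Adj d a) : False := by
  have hab := h1.ne
  have hbc := h2.ne
  have hcd := h3.ne
  have hda := h4.ne
  set w : G.Walk a a := Walk.cons h1 (Walk.cons h2 (Walk.cons h3 (Walk.cons h4 Walk.nil)))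
    with hw
  have hc : w.IsCycle := by
    rw [Walk.isCycle_def]
    refine ⟨?_, by simp [hw], ?_⟩
    · rw [Walk.isTrail_def]
      simp [hw, Sym2.eq, Sym2.rel_iff', hab, hbc, hcd, hda, hac, hbd]
      aesop
    · simp [hw]
      aesop
  have := egirth_le_of_isCycle hc
  rw [hw] at this
  simp at this
  have := le_trans hg this
  norm_num at this

lemma ncard_neighborSet_iso {β : Type*} {H : SimpleGraph α} {P : SimpleGraph β}
    (φ : H ≃g P) (v : α) : (H.neighborSet v).ncard = (P.neighborSet (φ v)).ncard := by
  rw [← Nat.card_coe_set_eq, ← Nat.card_coe_set_eq]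
  exact Nat.card_congr (φ.mapNeighborSet v)

lemma pathGraph_nbr_le_two {n : ℕ} (v : Fin n) :
    ((pathGraph n).neighborSet v).ncard ≤ 2 := by
  classical
  have h := Set.ncard_le_ncard_of_injOn (s := (pathGraph n).neighborSet v)
    (t := (Set.univ : Set Bool)) (fun x : Fin n => decide (v.val + 1 = x.val))
    (fun a _ => Set.mem_univ _) ?_ (Set.finite_univ)
  · simpa [Set.ncard_univ] using h
  · intro x hx y hy hxy
    rw [mem_neighborSet, pathGraph_adj] at hx hy
    simp only [decide_eq_decide] at hxy
    rcases hx with hx | hx <;> rcases hy with hy | hy <;> exact Fin.ext (by omega)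

lemma cycleGraph_nbr_le_two : ∀ {n : ℕ} (v : Fin n),
    ((cycleGraph n).neighborSet v).ncard ≤ 2
  | 0, v => v.elim0
  | 1, v => by
    have : (cycleGraph 1).neighborSet v = ∅ := by
      ext u; simp only [mem_neighborSet, Set.mem_empty_iff_false, iff_false]
      exact cycleGraph_one_adj
    simp [this]
  | (n+2), v => by
    rw [cycleGraph_neighborSet]
    exact le_trans (Set.ncard_insert_le _ _) (by simp)

/-- Every vertex of a nontrivial connected graph has a neighbor. -/
lemma exists_adj_of_connected [Nontrivial α] {H : SimpleGraph α} (hconn : H.Connected)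
    (v : α) : ∃ z, H.Adj v z := by
  obtain ⟨y, hy⟩ := exists_ne v
  obtain ⟨p⟩ := hconn.preconnected v y
  cases p with
  | nil => exact absurd rfl hy.symm
  | cons h _ => exact ⟨_, h⟩

lemma adj_dist_le_one {H : SimpleGraph α} {u v : α} (h : H.Adj u v) : H.dist u v ≤ 1 := by
  simpa using SimpleGraph.dist_le h.toWalk

lemma adjGen_three_le [Fintype α] (h7 : 7 ≤ Fintype.card α) {H : SimpleGraph α}
    {B : Set α} (hB : IsAdjGen H B) : 3 ≤ B.ncard := by
  classical
  by_contra hlt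
  push_neg at hlt
  have hBf : B.Finite := Set.toFinite B
  haveI : Fintype ↥B := hBf.fintype
  have hcardB : Fintype.card ↥B ≤ 2 := by
    have := Set.ncard_eq_toFinset_card' B
    rw [Set.toFinset_card] at this
    omega
  have hcompl : 5 ≤ Fintype.card ↥(Bᶜ : Set α) := by
    have h1 : Fintype.card ↥(Bᶜ : Set α) = Fintype.card α - Fintype.card ↥B :=
      Fintype.card_compl_set B
    omega
  have hlt2 : Fintype.card (↥B → Bool) < Fintype.card ↥(Bᶜ : Set α) := by
    rw [Fintype.card_fun]
    calc 2 ^ Fintype.card ↥B ≤ 2 ^ 2 := Nat.pow_le_pow_right (by norm_num) hcardB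
    _ < 5 := by norm_num
    _ ≤ _ := hcompl
  obtain ⟨x, y, hxy, hfeq⟩ := Fintype.exists_ne_map_eq_of_card_lt
    (fun (v : ↥(Bᶜ : Set α)) (b : ↥B) => decide (H.Adj ↑b ↑v)) hlt2
  obtain ⟨s, hs, hxor⟩ := hB x y x.2 y.2 (fun h => hxy (Subtype.ext h))
  have := congrFun hfeq ⟨s, hs⟩
  simp only [decide_eq_decide] at this
  rcases hxor with ⟨h1, h2⟩ | ⟨h1, h2⟩
  · exact h2 (this.mp h1)
  · exact h2 (this.mpr h1)

/-- Property P: no vertex outside an adjacency generator of size ≥ 3 is adjacent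
to all of it, for graphs of the four structural types. -/
lemma propP [Fintype α] (h7 : 7 ≤ Fintype.card α) {H : SimpleGraph α}
    (hc : Nonempty (H ≃g pathGraph (Fintype.card α)) ∨
      Nonempty (H ≃g cycleGraph (Fintype.card α)) ∨
      6 ≤ H.diam ∨ (5 ≤ H.egirth ∧ ∀ v : α, 3 ≤ (H.neighborSet v).ncard))
    {B : Set α} (hB : IsAdjGen H B) (hB3 : 3 ≤ B.ncard) {w : α} (hw : w ∉ B) :
    ∃ b ∈ B, ¬ H.Adj b w := by
  classical
  by_contra hcon
  push_neg at hcon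
  have hsub : B ⊆ H.neighborSet w := fun b hb => (hcon b hb).symm
  have hdeg : (H.neighborSet w).ncard ≤ 2 → False := by
    intro hk
    have := le_trans hB3 (Set.ncard_le_ncard hsub (Set.toFinite _))
    omega
  rcases hc with hpath | hcyc | hdiam | ⟨hgir, hmin⟩
  · obtain ⟨φ⟩ := hpath
    exact hdeg (by rw [ncard_neighborSet_iso φ w]; exact pathGraph_nbr_le_two _)
  · obtain ⟨φ⟩ := hcyc
    exact hdeg (by rw [ncard_neighborSet_iso φ w]; exact cycleGraph_nbr_le_two _)
  · -- diameter case
    have hnt : H.diam ≠ 0 := by omega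
    have hne : H.ediam ≠ ⊤ := ediam_ne_top_of_diam_ne_zero hnt
    haveI : Nontrivial α := nontrivial_of_diam_ne_zero hnt
    have hconn : H.Connected := by
      by_contra hnc
      exact hne (ediam_eq_top_of_not_connected hnc)
    set U : Set α := {v | v ∉ B ∧ ∀ b ∈ B, ¬ H.Adj b v} with hU
    have hUsub : ∀ x ∈ U, ∀ y ∈ U, x = y := by
      intro x hx y hy
      by_contra hne'
      obtain ⟨s, hs, hxor⟩ := hB x y hx.1 hy.1 hne'
      rcases hxor with ⟨h1, _⟩ | ⟨h1, _⟩
      · exact hx.2 s hs h1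
      · exact hy.2 s hs h1
    have hdw : ∀ v, v ∉ U → H.dist w v ≤ 2 := by
      intro v hv
      by_cases hvw : v = w
      · subst hvw
        simp [SimpleGraph.dist_self]
      by_cases hvB : v ∈ B
      · exact le_trans (adj_dist_le_one ((hcon v hvB).symm)) (by norm_num)
      · have : ∃ b ∈ B, H.Adj b v := by
          by_contra hb
          push_neg at hb
          exact hv ⟨hvB, hb⟩
        obtain ⟨b, hb, hadj⟩ := this
        calc H.dist w v ≤ H.dist w b + H.dist b v := hconn.dist_triangle
          _ ≤ 1 + 1 := add_le_add (adj_dist_le_one ((hcon b hb).symm)) (adj_dist_le_one hadj)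
          _ = 2 := rfl
    have hdw3 : ∀ v, H.dist w v ≤ 3 := by
      intro v
      by_cases hv : v ∈ U
      · obtain ⟨z, hz⟩ := exists_adj_of_connected hconn v
        have hzU : z ∉ U := fun hzU => hz.ne' (hUsub z hzU v hv)
        calc H.dist w v ≤ H.dist w z + H.dist z v := hconn.dist_triangle
          _ ≤ 2 + 1 := add_le_add (hdw z hzU) (adj_dist_le_one hz.symm)
          _ = 3 := rfl
      · exact le_trans (hdw v hv) (by norm_num)
    obtain ⟨u, v, huv⟩ := H.exists_dist_eq_diam
    have h5 : H.dist u v ≤ 5 := by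
      by_cases hu : u ∈ U
      · by_cases hv : v ∈ U
        · rw [hUsub u hu v hv]
          simp [SimpleGraph.dist_self]
        · calc H.dist u v ≤ H.dist u w + H.dist w v := hconn.dist_triangle
            _ ≤ 3 + 2 := by
                refine add_le_add ?_ (hdw v hv)
                rw [SimpleGraph.dist_comm]
                exact hdw3 u
            _ = 5 := rfl
      · calc H.dist u v ≤ H.dist u w + H.dist w v := hconn.dist_triangle
          _ ≤ 2 + 3 := by
              refine add_le_add ?_ (hdw3 v)
              rw [SimpleGraph.dist_comm]
              exact hdw u hu
          _ = 5 := rfl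
    omega
  · -- girth case
    obtain ⟨b, hb⟩ : B.Nonempty := by
      rw [← Set.ncard_pos]
      omega
    have hbw : H.Adj b w := hcon b hb
    have h2 : 2 ≤ ((H.neighborSet b) \ {w}).ncard := by
      have := hmin b
      have := Set.ncard_diff_singleton_le (H.neighborSet b) w
      have h' : (H.neighborSet b).ncard - 1 ≤ ((H.neighborSet b) \ {w}).ncard := by
        have hfin : (H.neighborSet b).Finite := Set.toFinite _
        have := Set.ncard_diff_singleton_add_one (show w ∈ H.neighborSet b from hbw) hfin
        omega
      omega
    obtain ⟨u₁, u₂, hu₁, hu₂, hu12⟩ := (Set.one_lt_ncard_iff (Set.toFinite _)).mp (by omega : 1 < ((H.neighborSet b) \ {w}).ncard)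
    obtain ⟨hu₁n, hu₁w⟩ := hu₁
    obtain ⟨hu₂n, hu₂w⟩ := hu₂
    rw [Set.mem_singleton_iff] at hu₁w hu₂w
    have hnB : ∀ u, H.Adj b u → u ≠ w → u ∉ B := by
      intro u hbu huw huB
      exact no_triangle hgir hbu (hcon u huB) hbw.symm
    have hu₁B : u₁ ∉ B := hnB u₁ hu₁n hu₁w
    have hu₂B : u₂ ∉ B := hnB u₂ hu₂n hu₂w
    obtain ⟨b', hb', hxor⟩ := hB u₁ u₂ hu₁B hu₂B hu12
    have hbb' : b' ≠ b := by
      rintro rfl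
      rcases hxor with ⟨_, h2'⟩ | ⟨_, h2'⟩
      · exact h2' hu₂n
      · exact h2' hu₁n
    -- wlog b' adj u₁
    have h4 : ∀ u, H.Adj b u → u ≠ w → H.Adj b' u → False := by
      intro u hbu huw hb'u
      exact no_c4 hgir (Ne.symm huw) hbb'.symm (hcon b hb).symm hbu hb'u.symm (hcon b' hb')
    rcases hxor with ⟨h1', _⟩ | ⟨h1', _⟩
    · exact h4 u₁ hu₁n hu₁w h1'
    · exact h4 u₂ hu₂n hu₂w h1'

section AdjLemmas
variable {V V' V₁ V₂ : Type*} {G : SimpleGraph V} {H : SimpleGraph V'}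
  {H₁ : SimpleGraph V₁} {H₂ : SimpleGraph V₂}

@[simp] lemma corona_adj_inl_inl {i j : V} :
    (corona G H).Adj (Sum.inl i) (Sum.inl j) ↔ G.Adj i j := Iff.rfl
@[simp] lemma corona_adj_inl_inr {i : V} {p : V × V'} :
    (corona G H).Adj (Sum.inl i) (Sum.inr p) ↔ i = p.1 := Iff.rfl
@[simp] lemma corona_adj_inr_inl {j : V} {p : V × V'} :
    (corona G H).Adj (Sum.inr p) (Sum.inl j) ↔ p.1 = j := Iff.rfl
@[simp] lemma corona_adj_inr_inr {p q : V × V'} :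
    (corona G H).Adj (Sum.inr p) (Sum.inr q) ↔ p.1 = q.1 ∧ H.Adj p.2 q.2 := Iff.rfl

@[simp] lemma joinG_adj_inl_inl {a b : V₁} :
    (joinG H₁ H₂).Adj (Sum.inl a) (Sum.inl b) ↔ H₁.Adj a b := Iff.rfl
@[simp] lemma joinG_adj_inl_inr {a : V₁} {b : V₂} :
    (joinG H₁ H₂).Adj (Sum.inl a) (Sum.inr b) := trivial
@[simp] lemma joinG_adj_inr_inl {a : V₁} {b : V₂} :
    (joinG H₁ H₂).Adj (Sum.inr b) (Sum.inl a) := trivial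
@[simp] lemma joinG_adj_inr_inr {a b : V₂} :
    (joinG H₁ H₂).Adj (Sum.inr a) (Sum.inr b) ↔ H₂.Adj a b := Iff.rfl

end AdjLemmas

section Upper
variable {V V₁ V₂ : Type*}

lemma mem_S_iff {B : Set (V₁ ⊕ V₂)} {i : V} {z : V₁ ⊕ V₂} :
    (Sum.inr (i, z) : V ⊕ V × (V₁ ⊕ V₂)) ∈
      (Sum.inr '' (Set.univ ×ˢ B) : Set (V ⊕ V × (V₁ ⊕ V₂))) ↔ z ∈ B := by
  constructor
  · rintro ⟨⟨j, z'⟩, hz, h⟩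
    simp only [Sum.inr.injEq, Prod.mk.injEq] at h
    rw [← h.2]
    exact hz.2
  · intro hz
    exact ⟨(i, z), ⟨Set.mem_univ _, hz⟩, rfl⟩

lemma inl_not_mem_S {B : Set (V₁ ⊕ V₂)} {i : V} :
    (Sum.inl i : V ⊕ V × (V₁ ⊕ V₂)) ∉ (Sum.inr '' (Set.univ ×ˢ B)) := by
  rintro ⟨p, _, h⟩
  cases h

lemma corona_upper (𝒢 : Set (SimpleGraph V)) (ℋ : Set (SimpleGraph V₁))
    (ℋ' : Set (SimpleGraph V₂)) {B₁ : Set V₁} {B₂ : Set V₂}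
    (hB₁ : IsSimAdjGen ℋ B₁) (hB₂ : IsSimAdjGen ℋ' B₂)
    (hP₁ : ∀ H ∈ ℋ, ∀ w ∉ B₁, ∃ b ∈ B₁, ¬H.Adj b w)
    (hP₂ : ∀ H ∈ ℋ', ∀ w ∉ B₂, ∃ b ∈ B₂, ¬H.Adj b w)
    (hB₁ne : B₁.Nonempty) (hB₂ne : B₂.Nonempty) :
    IsSimAdjGen (coronaFam 𝒢 (joinFam ℋ ℋ'))
      (Sum.inr '' (Set.univ ×ˢ (Sum.inl '' B₁ ∪ Sum.inr '' B₂))) := by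
  set B : Set (V₁ ⊕ V₂) := Sum.inl '' B₁ ∪ Sum.inr '' B₂ with hBdef
  obtain ⟨b₁, hb₁⟩ := hB₁ne
  obtain ⟨b₂, hb₂⟩ := hB₂ne
  have hb₁B : (Sum.inl b₁ : V₁ ⊕ V₂) ∈ B := Or.inl ⟨b₁, hb₁, rfl⟩
  have hb₂B : (Sum.inr b₂ : V₁ ⊕ V₂) ∈ B := Or.inr ⟨b₂, hb₂, rfl⟩
  rintro K ⟨G, hG, F, ⟨H, hH, H', hH', rfl⟩, rfl⟩
  -- key: property P for the join
  have hPjoin : ∀ z : V₁ ⊕ V₂, z ∉ B → ∃ b ∈ B, ¬ (joinG H H').Adj b z := by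
    rintro (w | w) hz
    · have hw : w ∉ B₁ := fun hw => hz (Or.inl ⟨w, hw, rfl⟩)
      obtain ⟨b, hb, hnadj⟩ := hP₁ H hH w hw
      exact ⟨Sum.inl b, Or.inl ⟨b, hb, rfl⟩, by simpa using hnadj⟩
    · have hw : w ∉ B₂ := fun hw => hz (Or.inr ⟨w, hw, rfl⟩)
      obtain ⟨b, hb, hnadj⟩ := hP₂ H' hH' w hw
      exact ⟨Sum.inr b, Or.inr ⟨b, hb, rfl⟩, by simpa using hnadj⟩
  -- B is an adjacency generator for the join
  have hBjoin : IsAdjGen (joinG H H') B := by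
    rintro (w | w) (w' | w') hw hw' hne
    · have hwB : w ∉ B₁ := fun h => hw (Or.inl ⟨w, h, rfl⟩)
      have hw'B : w' ∉ B₁ := fun h => hw' (Or.inl ⟨w', h, rfl⟩)
      obtain ⟨b, hb, hxor⟩ := hB₁ H hH w w' hwB hw'B (fun h => hne (by rw [h]))
      exact ⟨Sum.inl b, Or.inl ⟨b, hb, rfl⟩, by simpa using hxor⟩
    · have hwB : w ∉ B₁ := fun h => hw (Or.inl ⟨w, h, rfl⟩)
      obtain ⟨b, hb, hnadj⟩ := hP₁ H hH w hwB
      refine ⟨Sum.inl b, Or.inl ⟨b, hb, rfl⟩, Or.inr ⟨trivial, by simpa using hnadj⟩⟩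
    · have hw'B : w' ∉ B₁ := fun h => hw' (Or.inl ⟨w', h, rfl⟩)
      obtain ⟨b, hb, hnadj⟩ := hP₁ H hH w' hw'B
      refine ⟨Sum.inl b, Or.inl ⟨b, hb, rfl⟩, Or.inl ⟨trivial, by simpa using hnadj⟩⟩
    · have hwB : w ∉ B₂ := fun h => hw (Or.inr ⟨w, h, rfl⟩)
      have hw'B : w' ∉ B₂ := fun h => hw' (Or.inr ⟨w', h, rfl⟩)
      obtain ⟨b, hb, hxor⟩ := hB₂ H' hH' w w' hwB hw'B (fun h => hne (by rw [h]))
      exact ⟨Sum.inr b, Or.inr ⟨b, hb, rfl⟩, by simpa using hxor⟩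
  -- now the corona generator property
  rintro (i | ⟨i, z⟩) (j | ⟨j, z'⟩) hx hy hne
  · -- two G-vertices
    refine ⟨Sum.inr (i, Sum.inl b₁), mem_S_iff.mpr hb₁B, Or.inl ⟨rfl, ?_⟩⟩
    simp only [corona_adj_inr_inl]
    exact fun h => hne (by rw [h])
  · -- G-vertex vs copy-vertex
    by_cases hij : i = j
    · subst hij
      have hz' : z' ∉ B := fun h => hy (mem_S_iff.mpr h)
      obtain ⟨b, hb, hnadj⟩ := hPjoin z' hz'
      refine ⟨Sum.inr (i, b), mem_S_iff.mpr hb, Or.inl ⟨rfl, ?_⟩⟩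
      simp only [corona_adj_inr_inr]
      exact fun h => hnadj h.2
    · refine ⟨Sum.inr (i, Sum.inl b₁), mem_S_iff.mpr hb₁B, Or.inl ⟨rfl, ?_⟩⟩
      simp only [corona_adj_inr_inr]
      exact fun h => hij h.1
  · -- copy-vertex vs G-vertex (mirror)
    by_cases hij : j = i
    · subst hij
      have hz : z ∉ B := fun h => hx (mem_S_iff.mpr h)
      obtain ⟨b, hb, hnadj⟩ := hPjoin z hz
      refine ⟨Sum.inr (j, b), mem_S_iff.mpr hb, Or.inr ⟨rfl, ?_⟩⟩
      simp only [corona_adj_inr_inr]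
      exact fun h => hnadj h.2
    · refine ⟨Sum.inr (j, Sum.inl b₁), mem_S_iff.mpr hb₁B, Or.inr ⟨rfl, ?_⟩⟩
      simp only [corona_adj_inr_inr]
      exact fun h => hij h.1
  · -- two copy-vertices
    by_cases hij : i = j
    · subst hij
      have hz : z ∉ B := fun h => hx (mem_S_iff.mpr h)
      have hz' : z' ∉ B := fun h => hy (mem_S_iff.mpr h)
      have hzz' : z ≠ z' := fun h => hne (by rw [h])
      obtain ⟨b, hb, hxor⟩ := hBjoin z z' hz hz' hzz'
      refine ⟨Sum.inr (i, b), mem_S_iff.mpr hb, ?_⟩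
      simp only [corona_adj_inr_inr]
      rcases hxor with ⟨h1, h2⟩ | ⟨h1, h2⟩
      · exact Or.inl ⟨⟨by trivial, h1⟩, fun h => h2 h.2⟩
      · exact Or.inr ⟨⟨by trivial, h1⟩, fun h => h2 h.2⟩
    · -- different copies: distinguish by a vertex of copy i on the opposite side of z
      rcases z with w | w
      · refine ⟨Sum.inr (i, Sum.inr b₂), mem_S_iff.mpr hb₂B, Or.inl ⟨?_, ?_⟩⟩
        · simp
        · simp only [corona_adj_inr_inr]
          exact fun h => hij h.1
      · refine ⟨Sum.inr (i, Sum.inl b₁), mem_S_iff.mpr hb₁B, Or.inl ⟨?_, ?_⟩⟩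
        · simp
        · simp only [corona_adj_inr_inr]
          exact fun h => hij h.1

end Upper

section Card
variable {V V₁ V₂ : Type*}

lemma ncard_sum_union (B₁ : Set V₁) (B₂ : Set V₂) [Fintype V₁] [Fintype V₂] :
    ((Sum.inl '' B₁ ∪ Sum.inr '' B₂ : Set (V₁ ⊕ V₂))).ncard = B₁.ncard + B₂.ncard := by
  rw [Set.ncard_union_eq ?_ (Set.toFinite _) (Set.toFinite _),
    Set.ncard_image_of_injective _ Sum.inl_injective,
    Set.ncard_image_of_injective _ Sum.inr_injective]
  rw [Set.disjoint_left]
  rintro _ ⟨a, _, rfl⟩ ⟨b, _, h⟩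
  cases h

lemma ncard_inr_prod [Fintype V] [Fintype V₁] [Fintype V₂] (B : Set (V₁ ⊕ V₂)) :
    (Sum.inr '' (Set.univ ×ˢ B) : Set (V ⊕ V × (V₁ ⊕ V₂))).ncard
      = Fintype.card V * B.ncard := by
  rw [Set.ncard_image_of_injective _ Sum.inr_injective,
    ← Nat.card_coe_set_eq, Nat.card_congr (Equiv.Set.prod _ _), Nat.card_prod,
    Nat.card_coe_set_eq, Nat.card_coe_set_eq, Set.ncard_univ,
    Nat.card_eq_fintype_card]

end Card

section Lower
variable {V V₁ V₂ : Type*}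

lemma corona_lower [Fintype V] [Fintype V₁] [Fintype V₂]
    (𝒢 : Set (SimpleGraph V)) (h𝒢ne : 𝒢.Nonempty)
    (ℋ : Set (SimpleGraph V₁)) (ℋ' : Set (SimpleGraph V₂))
    {S : Set (V ⊕ V × (V₁ ⊕ V₂))}
    (hℋ'ne : ℋ'.Nonempty) (hℋne : ℋ.Nonempty)
    (hS : IsSimAdjGen (coronaFam 𝒢 (joinFam ℋ ℋ')) S) :
    Fintype.card V * (SdA ℋ + SdA ℋ') ≤ S.ncard := by
  classical
  obtain ⟨G₀, hG₀⟩ := h𝒢ne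
  obtain ⟨H₀, hH₀⟩ := hℋne
  obtain ⟨H'₀, hH'₀⟩ := hℋ'ne
  set A₁ : V → Set V₁ := fun i => {w | Sum.inr (i, Sum.inl w) ∈ S} with hA₁
  set A₂ : V → Set V₂ := fun i => {w | Sum.inr (i, Sum.inr w) ∈ S} with hA₂
  have hgen₁ : ∀ i, IsSimAdjGen ℋ (A₁ i) := by
    intro i H hH w w' hw hw' hne
    have hK : corona G₀ (joinG H H'₀) ∈ coronaFam 𝒢 (joinFam ℋ ℋ') :=
      ⟨G₀, hG₀, _, ⟨H, hH, H'₀, hH'₀, rfl⟩, rfl⟩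
    obtain ⟨s, hs, hxor⟩ := hS _ hK (Sum.inr (i, Sum.inl w)) (Sum.inr (i, Sum.inl w'))
      hw hw' (by simp [hne])
    rcases s with j | ⟨j, z⟩
    · simp [Xor'] at hxor
    · by_cases hji : j = i
      · subst hji
        rcases z with b | b
        · exact ⟨b, hs, by simpa [Xor'] using hxor⟩
        · simp [Xor'] at hxor
      · simp [Xor', hji] at hxor
  have hgen₂ : ∀ i, IsSimAdjGen ℋ' (A₂ i) := by
    intro i H' hH' w w' hw hw' hne
    have hK : corona G₀ (joinG H₀ H') ∈ coronaFam 𝒢 (joinFam ℋ ℋ') :=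
      ⟨G₀, hG₀, _, ⟨H₀, hH₀, H', hH', rfl⟩, rfl⟩
    obtain ⟨s, hs, hxor⟩ := hS _ hK (Sum.inr (i, Sum.inr w)) (Sum.inr (i, Sum.inr w'))
      hw hw' (by simp [hne])
    rcases s with j | ⟨j, z⟩
    · simp [Xor'] at hxor
    · by_cases hji : j = i
      · subst hji
        rcases z with b | b
        · simp [Xor'] at hxor
        · exact ⟨b, hs, by simpa [Xor'] using hxor⟩
      · simp [Xor', hji] at hxor
  have hle₁ : ∀ i, SdA ℋ ≤ (A₁ i).ncard := fun i => Nat.sInf_le ⟨A₁ i, rfl, hgen₁ i⟩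
  have hle₂ : ∀ i, SdA ℋ' ≤ (A₂ i).ncard := fun i => Nat.sInf_le ⟨A₂ i, rfl, hgen₂ i⟩
  -- counting
  set f : V → Set (V ⊕ V × (V₁ ⊕ V₂)) :=
    fun i => (fun z => (Sum.inr (i, z) : V ⊕ V × (V₁ ⊕ V₂))) ''
      (Sum.inl '' A₁ i ∪ Sum.inr '' A₂ i) with hf
  have hinj : ∀ i, Function.Injective
      (fun z => (Sum.inr (i, z) : V ⊕ V × (V₁ ⊕ V₂))) := by
    intro i a b h
    simpa using h
  have hfsub : ∀ i, f i ⊆ S := by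
    rintro i _ ⟨z, hz, rfl⟩
    rcases hz with ⟨w, hw, rfl⟩ | ⟨w, hw, rfl⟩
    · exact hw
    · exact hw
  have hfcard : ∀ i, (A₁ i).ncard + (A₂ i).ncard = (f i).ncard := by
    intro i
    rw [hf]
    rw [Set.ncard_image_of_injective _ (hinj i), ncard_sum_union]
  have hdisj : ∀ i ∈ Finset.univ, ∀ j ∈ Finset.univ, i ≠ j →
      Disjoint ((Set.toFinite (f i)).toFinset) ((Set.toFinite (f j)).toFinset) := by
    intro i _ j _ hij
    rw [Finset.disjoint_left]
    intro a ha hb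
    rw [Set.Finite.mem_toFinset] at ha hb
    obtain ⟨z, _, rfl⟩ := ha
    obtain ⟨z', _, h⟩ := hb
    simp only [Sum.inr.injEq, Prod.mk.injEq] at h
    exact hij h.1.symm
  have key : ∑ i : V, (f i).ncard ≤ S.ncard := by
    have h1 : ∀ i : V, (f i).ncard = ((Set.toFinite (f i)).toFinset).card :=
      fun i => Set.ncard_eq_toFinset_card _ _
    calc ∑ i : V, (f i).ncard
        = ∑ i : V, ((Set.toFinite (f i)).toFinset).card := by simp_rw [h1]
      _ = (Finset.univ.biUnion fun i => (Set.toFinite (f i)).toFinset).card :=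
          (Finset.card_biUnion hdisj).symm
      _ ≤ ((Set.toFinite S).toFinset).card := by
          apply Finset.card_le_card
          intro x hx
          rw [Finset.mem_biUnion] at hx
          obtain ⟨i, _, hx⟩ := hx
          rw [Set.Finite.mem_toFinset] at hx ⊢
          exact hfsub i hx
      _ = S.ncard := (Set.ncard_eq_toFinset_card _ _).symm
  calc Fintype.card V * (SdA ℋ + SdA ℋ')
      = ∑ _i : V, (SdA ℋ + SdA ℋ') := by
        rw [Finset.sum_const, Finset.card_univ, smul_eq_mul]
    _ ≤ ∑ i : V, (f i).ncard := by
        apply Finset.sum_le_sum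
        intro i _
        rw [← hfcard i]
        exact add_le_add (hle₁ i) (hle₂ i)
    _ ≤ S.ncard := key

end Lower

end Helpers

theorem statement_15 {V V₁ V₂ : Type*} [Fintype V] [Nontrivial V] [Fintype V₁] [Fintype V₂]
    (𝒢 : Set (SimpleGraph V)) (h𝒢ne : 𝒢.Nonempty) (h𝒢 : ∀ G ∈ 𝒢, G.Connected)
    (hV₁ : 7 ≤ Fintype.card V₁) (hV₂ : 7 ≤ Fintype.card V₂)
    (ℋ : Set (SimpleGraph V₁)) (hℋne : ℋ.Nonempty)
    (ℋ' : Set (SimpleGraph V₂)) (hℋ'ne : ℋ'.Nonempty)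
    (hcond : ∀ H ∈ ℋ, Nonempty (H ≃g SimpleGraph.pathGraph (Fintype.card V₁)) ∨
      Nonempty (H ≃g SimpleGraph.cycleGraph (Fintype.card V₁)) ∨
      6 ≤ H.diam ∨ (5 ≤ H.egirth ∧ ∀ v : V₁, 3 ≤ (H.neighborSet v).ncard))
    (hcond' : ∀ H' ∈ ℋ', Nonempty (H' ≃g SimpleGraph.pathGraph (Fintype.card V₂)) ∨
      Nonempty (H' ≃g SimpleGraph.cycleGraph (Fintype.card V₂)) ∨
      6 ≤ H'.diam ∨ (5 ≤ H'.egirth ∧ ∀ v : V₂, 3 ≤ (H'.neighborSet v).ncard)) :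
    SdA (coronaFam 𝒢 (joinFam ℋ ℋ')) =
      Fintype.card V * SdA ℋ + Fintype.card V * SdA ℋ' := by
  classical
  obtain ⟨H₀, hH₀⟩ := hℋne
  obtain ⟨H'₀, hH'₀⟩ := hℋ'ne
  -- minimum simultaneous adjacency bases of ℋ and ℋ'
  have hne₁ : {n | ∃ S : Set V₁, S.ncard = n ∧ IsSimAdjGen ℋ S}.Nonempty :=
    ⟨(Set.univ : Set V₁).ncard, Set.univ, rfl,
      fun H _ x _ hx _ _ => absurd (Set.mem_univ x) hx⟩
  have hne₂ : {n | ∃ S : Set V₂, S.ncard = n ∧ IsSimAdjGen ℋ' S}.Nonempty :=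
    ⟨(Set.univ : Set V₂).ncard, Set.univ, rfl,
      fun H _ x _ hx _ _ => absurd (Set.mem_univ x) hx⟩
  have hmem₁ : SdA ℋ ∈ {n | ∃ S : Set V₁, S.ncard = n ∧ IsSimAdjGen ℋ S} :=
    Nat.sInf_mem hne₁
  have hmem₂ : SdA ℋ' ∈ {n | ∃ S : Set V₂, S.ncard = n ∧ IsSimAdjGen ℋ' S} :=
    Nat.sInf_mem hne₂
  obtain ⟨B₁, hB₁card, hB₁gen⟩ := hmem₁
  obtain ⟨B₂, hB₂card, hB₂gen⟩ := hmem₂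
  have hB₁3 : 3 ≤ B₁.ncard := adjGen_three_le hV₁ (hB₁gen H₀ hH₀)
  have hB₂3 : 3 ≤ B₂.ncard := adjGen_three_le hV₂ (hB₂gen H'₀ hH'₀)
  have hB₁ne : B₁.Nonempty := (Set.ncard_pos (Set.toFinite _)).mp (by omega)
  have hB₂ne : B₂.Nonempty := (Set.ncard_pos (Set.toFinite _)).mp (by omega)
  have hP₁ : ∀ H ∈ ℋ, ∀ w ∉ B₁, ∃ b ∈ B₁, ¬H.Adj b w :=
    fun H hH w hw => propP hV₁ (hcond H hH) (hB₁gen H hH) hB₁3 hw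
  have hP₂ : ∀ H' ∈ ℋ', ∀ w ∉ B₂, ∃ b ∈ B₂, ¬H'.Adj b w :=
    fun H' hH' w hw => propP hV₂ (hcond' H' hH') (hB₂gen H' hH') hB₂3 hw
  have hupper := corona_upper 𝒢 ℋ ℋ' hB₁gen hB₂gen hP₁ hP₂ hB₁ne hB₂ne
  have hcardS : (Sum.inr '' (Set.univ ×ˢ (Sum.inl '' B₁ ∪ Sum.inr '' B₂)) :
      Set (V ⊕ V × (V₁ ⊕ V₂))).ncard
      = Fintype.card V * SdA ℋ + Fintype.card V * SdA ℋ' := by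
    rw [ncard_inr_prod, ncard_sum_union, hB₁card, hB₂card, mul_add]
  have hmem : Fintype.card V * SdA ℋ + Fintype.card V * SdA ℋ' ∈
      {n | ∃ S : Set (V ⊕ V × (V₁ ⊕ V₂)), S.ncard = n ∧
        IsSimAdjGen (coronaFam 𝒢 (joinFam ℋ ℋ')) S} :=
    ⟨_, hcardS, hupper⟩
  refine le_antisymm (Nat.sInf_le hmem) (le_csInf ⟨_, hmem⟩ ?_)
  rintro m ⟨S, rfl, hgen⟩
  have := corona_lower 𝒢 h𝒢ne ℋ ℋ' ⟨H'₀, hH'₀⟩ ⟨H₀, hH₀⟩ hgen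
  rw [mul_add] at this
  exact this
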